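/- Let n ≥ 7 and 0 < s < 2, 2⋆(s) = 2(n-s)/(n-2). With U₁(X) = κ_{n,s}(1+|X|^{2-s})^{-(n-2)/(2-s)}, κ_{n,s} = ((n-s)(n-2))^{(n-2)/(2(2-s))}, one has ∫_{ℝⁿ}|X|^{4-s} U₁^{2⋆(s)} dX / ∫_{ℝⁿ}|X|²U₁² dX = (n-s)(n-6)(n+2) / (2(2n-2-s)). -/

import Mathlib

open Real MeasureTheory Set Filter Topology

noncomputable def Jf (t p q r : ℝ) : ℝ := r ^ p * (1 + r ^ t) ^ (-q)
noncomputable def Jint (t p q : ℝ) : ℝ := ∫ r in Set.Ioi (0:ℝ), Jf t p q r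

lemma Jf_pos {t p q r : ℝ} (hr : 0 < r) : 0 < Jf t p q r := by
  have h1 : 0 < 1 + r ^ t := by positivity
  exact mul_pos (rpow_pos_of_pos hr p) (rpow_pos_of_pos h1 _)

lemma Jf_contOn (t p q : ℝ) : ContinuousOn (Jf t p q) (Ioi 0) := by
  apply ContinuousOn.mul
  · exact fun x hx => (Real.continuousAt_rpow_const x p (Or.inl (ne_of_gt hx))).continuousWithinAt
  · apply ContinuousOn.rpow_const
    · exact continuousOn_const.add (fun x hx => (Real.continuousAt_rpow_const x t (Or.inl (ne_of_gt hx))).continuousWithinAt)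
    · intro x hx
      left
      have h0 : (0:ℝ) ≤ x ^ t := rpow_nonneg (le_of_lt (mem_Ioi.mp hx)) t
      have : 0 < 1 + x ^ t := by linarith
      exact ne_of_gt this

lemma Jf_bound_ge_one {t p q r : ℝ} (ht : 0 < t) (hq : 0 ≤ q) (hr : 1 ≤ r) :
    Jf t p q r ≤ r ^ (p - q * t) := by
  have hr0 : 0 < r := lt_of_lt_of_le one_pos hr
  have h1 : (1 + r ^ t) ^ (-q) ≤ (r ^ t) ^ (-q) := by
    apply Real.rpow_le_rpow_of_nonpos (rpow_pos_of_pos hr0 t) (by linarith [rpow_nonneg hr0.le t]) (by linarith)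
  calc Jf t p q r ≤ r ^ p * (r ^ t) ^ (-q) :=
        mul_le_mul_of_nonneg_left h1 (rpow_nonneg hr0.le p)
    _ = r ^ (p - q * t) := by
        rw [← Real.rpow_mul hr0.le, ← Real.rpow_add hr0]
        ring_nf

lemma Jint_integrableOn {t p q : ℝ} (ht : 0 < t) (hp : -1 < p) (hq : p + 1 < q * t) :
    IntegrableOn (Jf t p q) (Ioi 0) := by
  have hq0 : 0 < q := by nlinarith
  have hsplit : Ioi (0:ℝ) = Ioc 0 1 ∪ Ioi 1 := (Ioc_union_Ioi_eq_Ioi zero_le_one).symm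
  rw [hsplit]
  apply IntegrableOn.union
  · -- on Ioc 0 1, bound by r ^ p
    have hint : IntegrableOn (fun r : ℝ => r ^ p) (Ioc 0 1) := by
      have := intervalIntegral.intervalIntegrable_rpow' (a := 0) (b := 1) hp
      rwa [intervalIntegrable_iff_integrableOn_Ioc_of_le zero_le_one] at this
    apply Integrable.mono' hint
    · exact ((Jf_contOn t p q).mono Ioc_subset_Ioi_self).aestronglyMeasurable measurableSet_Ioc
    · filter_upwards [ae_restrict_mem measurableSet_Ioc] with r hr
      have hr0 : 0 < r := hr.1
      rw [Real.norm_of_nonneg (Jf_pos hr0).le]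
      have h1 : (1 + r ^ t) ^ (-q) ≤ 1 :=
        Real.rpow_le_one_of_one_le_of_nonpos (by linarith [rpow_nonneg hr0.le t]) (by linarith)
      calc Jf t p q r ≤ r ^ p * 1 := mul_le_mul_of_nonneg_left h1 (rpow_nonneg hr0.le p)
        _ = r ^ p := mul_one _
  · -- on Ioi 1, bound by r ^ (p - q*t)
    have hint : IntegrableOn (fun r : ℝ => r ^ (p - q * t)) (Ioi 1) :=
      integrableOn_Ioi_rpow_of_lt (by linarith) one_pos
    apply Integrable.mono' hint
    · exact ((Jf_contOn t p q).mono (fun x (hx : x ∈ Ioi (1:ℝ)) => mem_Ioi.mpr (lt_trans one_pos (mem_Ioi.mp hx)))).aestronglyMeasurable measurableSet_Ioi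
    · filter_upwards [ae_restrict_mem measurableSet_Ioi] with r hr
      have hr0 : 0 < r := lt_trans one_pos hr
      rw [Real.norm_of_nonneg (Jf_pos hr0).le]
      exact Jf_bound_ge_one ht hq0.le hr.le

lemma Jint_pos {t p q : ℝ} (ht : 0 < t) (hp : -1 < p) (hq : p + 1 < q * t) :
    0 < Jint t p q := by
  have hnn : 0 ≤ᶠ[ae (volume.restrict (Ioi 0))] Jf t p q := by
    filter_upwards [ae_restrict_mem measurableSet_Ioi] with r hr using (Jf_pos hr).le
  rw [Jint]
  refine (setIntegral_pos_iff_support_of_nonneg_ae hnn (Jint_integrableOn ht hp hq)).2 ?_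
  have hsub : Ioi (0:ℝ) ⊆ Function.support (Jf t p q) ∩ Ioi 0 :=
    fun r hr => ⟨ne_of_gt (Jf_pos hr), hr⟩
  have h0 : (0:ENNReal) < volume (Ioi (0:ℝ)) := by simp
  exact lt_of_lt_of_le h0 (measure_mono hsub)

-- IBP: (p+1) * Jint t p q = q * t * Jint t (p+t) (q+1)
lemma Jint_ibp {t p q : ℝ} (ht : 0 < t) (hp : 0 < p) (hq : p + 1 < q * t) :
    (p + 1) * Jint t p q = q * t * Jint t (p + t) (q + 1) := by
  have hq0 : 0 < q := by nlinarith
  set F : ℝ → ℝ := fun r => r ^ (p + 1) * (1 + r ^ t) ^ (-q) with hF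
  set G : ℝ → ℝ := fun r => (p + 1) * Jf t p q r - (q * t) * Jf t (p + t) (q + 1) r with hG
  have int1 : IntegrableOn (Jf t p q) (Ioi 0) := Jint_integrableOn ht (by linarith) hq
  have int2 : IntegrableOn (Jf t (p + t) (q + 1)) (Ioi 0) := by
    apply Jint_integrableOn ht (by linarith)
    nlinarith
  have intG : IntegrableOn G (Ioi 0) := (int1.const_mul _).sub (int2.const_mul _)
  have hderiv : ∀ x ∈ Ioi (0:ℝ), HasDerivAt F (G x) x := by
    intro x hx
    have hx0 : (0:ℝ) < x := hx
    have hb : (0:ℝ) < 1 + x ^ t := by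
      have := rpow_nonneg hx0.le t; linarith
    have d1 : HasDerivAt (fun r : ℝ => r ^ (p + 1)) ((p + 1) * x ^ p) x := by
      have := Real.hasDerivAt_rpow_const (x := x) (p := p + 1) (Or.inl hx0.ne')
      convert this using 1
      rw [show p + 1 - 1 = p by ring]
    have d2 : HasDerivAt (fun r : ℝ => 1 + r ^ t) (t * x ^ (t - 1)) x := by
      have := Real.hasDerivAt_rpow_const (x := x) (p := t) (Or.inl hx0.ne')
      simpa using (this.const_add 1)
    have d3 : HasDerivAt (fun y : ℝ => y ^ (-q)) (-q * (1 + x ^ t) ^ (-q - 1)) (1 + x ^ t) :=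
      Real.hasDerivAt_rpow_const (Or.inl hb.ne')
    have d4 : HasDerivAt (fun r : ℝ => (1 + r ^ t) ^ (-q))
        (-q * (1 + x ^ t) ^ (-q - 1) * (t * x ^ (t - 1))) x := by have := d3.comp x d2; exact this
    have : HasDerivAt F ((p + 1) * x ^ p * (1 + x ^ t) ^ (-q)
        + x ^ (p + 1) * (-q * (1 + x ^ t) ^ (-q - 1) * (t * x ^ (t - 1)))) x := d1.mul d4
    convert this using 1
    show (p + 1) * Jf t p q x - q * t * Jf t (p + t) (q + 1) x = _
    simp only [Jf]
    have e1 : x ^ (p + 1) * x ^ (t - 1) = x ^ (p + t) := by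
      rw [← Real.rpow_add hx0]; ring_nf
    have e2 : (1 + x ^ t) ^ (-q - 1) = (1 + x ^ t) ^ (-(q + 1)) := by ring_nf
    calc (p + 1) * (x ^ p * (1 + x ^ t) ^ (-q)) - q * t * (x ^ (p + t) * (1 + x ^ t) ^ (-(q + 1)))
        = (p + 1) * x ^ p * (1 + x ^ t) ^ (-q)
          - q * t * ((x ^ (p + 1) * x ^ (t - 1)) * (1 + x ^ t) ^ (-q - 1)) := by
          rw [e1, e2]; ring
      _ = (p + 1) * x ^ p * (1 + x ^ t) ^ (-q)
          + x ^ (p + 1) * (-q * (1 + x ^ t) ^ (-q - 1) * (t * x ^ (t - 1))) := by ring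
  have hcont : ContinuousWithinAt F (Ici 0) 0 := by
    apply ContinuousAt.continuousWithinAt
    apply ContinuousAt.mul
    · exact Real.continuousAt_rpow_const 0 (p + 1) (Or.inr (by linarith))
    · apply ContinuousAt.rpow_const
      · exact (Real.continuousAt_rpow_const 0 t (Or.inr ht.le)).const_add 1
      · left
        simp [Real.zero_rpow ht.ne']
  have htop : Tendsto F atTop (𝓝 0) := by
    apply squeeze_zero' (g := fun r : ℝ => r ^ (p + 1 - q * t))
    · filter_upwards [eventually_gt_atTop 0] with r hr
      have hb : (0:ℝ) < 1 + r ^ t := by have := rpow_nonneg hr.le t; linarith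
      positivity
    · filter_upwards [eventually_ge_atTop 1] with r hr
      have hr0 : (0:ℝ) < r := lt_of_lt_of_le one_pos hr
      have h1 : (1 + r ^ t) ^ (-q) ≤ (r ^ t) ^ (-q) :=
        Real.rpow_le_rpow_of_nonpos (rpow_pos_of_pos hr0 t)
          (by linarith [rpow_nonneg hr0.le t]) (by linarith)
      calc F r ≤ r ^ (p + 1) * (r ^ t) ^ (-q) :=
            mul_le_mul_of_nonneg_left h1 (rpow_nonneg hr0.le _)
        _ = r ^ (p + 1 - q * t) := by
            rw [← Real.rpow_mul hr0.le, ← Real.rpow_add hr0]; ring_nf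
    · have := tendsto_rpow_neg_atTop (y := q * t - (p + 1)) (by linarith)
      convert this using 2 with r
      ring_nf
  have key : ∫ x in Ioi (0:ℝ), G x = 0 - F 0 :=
    integral_Ioi_of_hasDerivAt_of_tendsto hcont hderiv intG htop
  have hF0 : F 0 = 0 := by
    rw [hF]; simp [Real.zero_rpow (by linarith : p + 1 ≠ 0)]
  rw [hF0, sub_zero] at key
  rw [hG] at key
  rw [integral_sub (int1.const_mul _) (int2.const_mul _), integral_const_mul, integral_const_mul] at key
  rw [Jint, Jint]
  linarith

-- split: Jint t p q = Jint t p (q+1) + Jint t (p+t) (q+1)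
lemma Jint_split {t p q : ℝ} (ht : 0 < t) (hp : -1 < p) (hq : p + 1 < q * t) :
    Jint t p q = Jint t p (q + 1) + Jint t (p + t) (q + 1) := by
  have int1 : IntegrableOn (Jf t p (q + 1)) (Ioi 0) := by
    apply Jint_integrableOn ht hp; nlinarith
  have int2 : IntegrableOn (Jf t (p + t) (q + 1)) (Ioi 0) := by
    apply Jint_integrableOn ht (by linarith); nlinarith
  rw [Jint, Jint, Jint, ← integral_add int1 int2]
  apply setIntegral_congr_fun measurableSet_Ioi
  intro r hr
  have hr0 : (0:ℝ) < r := hr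
  have hb : (0:ℝ) < 1 + r ^ t := by have := rpow_nonneg hr0.le t; linarith
  simp only [Jf]
  have e1 : r ^ (p + t) = r ^ p * r ^ t := Real.rpow_add hr0 p t
  have e2 : (1 + r ^ t) ^ (-q) = (1 + r ^ t) ^ (-(q+1)) * (1 + r ^ t) := by
    rw [← Real.rpow_add_one hb.ne' (-(q+1))]
    ring_nf
  rw [e1, e2]
  ring

lemma Jint_ratio {t a b : ℝ} (ht : 0 < t) (ha : 0 < a) (h1 : a + 1 < b * t) :
    ((b + 1) * t) * (b * t) * Jint t (a + t) (b + 2) = (a + 1) * (b * t - (a + 1)) * Jint t a b := by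
  have r1 := Jint_ibp ht ha h1
  have r2 := Jint_split ht (by linarith) h1
  have r3 := Jint_ibp ht ha (by nlinarith : a + 1 < (b + 1) * t)
  rw [show b + 1 + 1 = b + 2 by ring] at r3
  linear_combination (-(b * t)) * r3 + (a + 1) * r1 - (a + 1) * (b * t) * r2

noncomputable def kappa (n : ℕ) (s : ℝ) : ℝ :=
  (((n : ℝ) - s) * ((n : ℝ) - 2)) ^ (((n : ℝ) - 2) / (2 * (2 - s)))

noncomputable def U1 (n : ℕ) (s : ℝ) (X : EuclideanSpace ℝ (Fin n)) : ℝ :=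
  kappa n s * (1 + ‖X‖ ^ (2 - s)) ^ (-(((n : ℝ) - 2) / (2 - s)))

noncomputable def critExp (n : ℕ) (s : ℝ) : ℝ := 2 * ((n : ℝ) - s) / ((n : ℝ) - 2)

theorem stmt_10 (n : ℕ) (hn : 7 ≤ n) (s : ℝ) (hs0 : 0 < s) (hs2 : s < 2) :
    (∫ X : EuclideanSpace ℝ (Fin n), ‖X‖ ^ (4 - s) * (U1 n s X) ^ (critExp n s)) /
        (∫ X : EuclideanSpace ℝ (Fin n), ‖X‖ ^ 2 * (U1 n s X) ^ 2) =
      ((n : ℝ) - s) * ((n : ℝ) - 6) * ((n : ℝ) + 2) / (2 * (2 * (n : ℝ) - 2 - s)) := by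
  have hn7 : (7:ℝ) ≤ (n:ℝ) := by exact_mod_cast hn
  have ht : (0:ℝ) < 2 - s := by linarith
  have hn2 : (0:ℝ) < (n:ℝ) - 2 := by linarith
  have hns : (0:ℝ) < (n:ℝ) - s := by linarith
  have hkappa : 0 < kappa n s := Real.rpow_pos_of_pos (by positivity) _
  haveI : Nontrivial (EuclideanSpace ℝ (Fin n)) := by
    apply Module.nontrivial_of_finrank_pos (R := ℝ)
    rw [finrank_euclideanSpace_fin]; omega
  set C : ℝ := (n : ℝ) * (volume (Metric.ball (0 : EuclideanSpace ℝ (Fin n)) 1)).toReal with hC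
  have hCpos : 0 < C := by
    apply mul_pos (by positivity)
    rw [ENNReal.toReal_pos_iff]
    exact ⟨Metric.measure_ball_pos volume 0 one_pos, measure_ball_lt_top⟩
  have hB : ∀ y : ℝ, 0 < y → (0:ℝ) < 1 + y ^ (2 - s) := by
    intro y hy; have := Real.rpow_nonneg hy.le (2 - s); linarith
  -- Numerator
  have hnum : (∫ X : EuclideanSpace ℝ (Fin n), ‖X‖ ^ (4 - s) * (U1 n s X) ^ (critExp n s))
      = C * (kappa n s ^ (critExp n s) *
          Jint (2 - s) ((n:ℝ) + 3 - s) (2 * ((n:ℝ) - s) / (2 - s))) := by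
    have h := integral_fun_norm_addHaar (volume : Measure (EuclideanSpace ℝ (Fin n)))
      (fun r : ℝ => r ^ (4 - s) *
        (kappa n s * (1 + r ^ (2 - s)) ^ (-(((n:ℝ) - 2) / (2 - s)))) ^ (critExp n s))
    simp only [U1]
    rw [h, finrank_euclideanSpace_fin, nsmul_eq_mul, smul_eq_mul, hC, mul_assoc]
    congr 1
    congr 1
    rw [Jint, ← integral_const_mul]
    apply setIntegral_congr_fun measurableSet_Ioi
    intro y hy
    have hy0 : (0:ℝ) < y := hy
    have hb := hB y hy0
    simp only [smul_eq_mul, Jf]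
    rw [← Real.rpow_natCast y (n - 1), Nat.cast_sub (by omega : 1 ≤ n), Nat.cast_one,
      Real.mul_rpow hkappa.le (Real.rpow_nonneg hb.le _), ← Real.rpow_mul hb.le]
    have he : -(((n:ℝ) - 2) / (2 - s)) * critExp n s = -(2 * ((n:ℝ) - s) / (2 - s)) := by
      rw [critExp]; field_simp
    rw [he]
    have hyy : y ^ ((n:ℝ) - 1) * y ^ (4 - s) = y ^ ((n:ℝ) + 3 - s) := by
      rw [← Real.rpow_add hy0]; ring_nf
    rw [← hyy]
    ring
  -- Denominator
  have hden : (∫ X : EuclideanSpace ℝ (Fin n), ‖X‖ ^ 2 * (U1 n s X) ^ 2)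
      = C * (kappa n s ^ 2 *
          Jint (2 - s) ((n:ℝ) + 1) (2 * ((n:ℝ) - 2) / (2 - s))) := by
    have h := integral_fun_norm_addHaar (volume : Measure (EuclideanSpace ℝ (Fin n)))
      (fun r : ℝ => r ^ 2 *
        (kappa n s * (1 + r ^ (2 - s)) ^ (-(((n:ℝ) - 2) / (2 - s)))) ^ 2)
    simp only [U1]
    rw [h, finrank_euclideanSpace_fin, nsmul_eq_mul, smul_eq_mul, hC, mul_assoc]
    congr 1
    congr 1
    rw [Jint, ← integral_const_mul]
    apply setIntegral_congr_fun measurableSet_Ioi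
    intro y hy
    have hy0 : (0:ℝ) < y := hy
    have hb := hB y hy0
    simp only [smul_eq_mul, Jf]
    rw [mul_pow, ← Real.rpow_natCast ((1 + y ^ (2 - s)) ^ (-(((n:ℝ) - 2) / (2 - s)))) 2,
      ← Real.rpow_mul hb.le]
    have he : -(((n:ℝ) - 2) / (2 - s)) * ((2:ℕ):ℝ) = -(2 * ((n:ℝ) - 2) / (2 - s)) := by
      push_cast; field_simp
    rw [he]
    rw [← Real.rpow_natCast y (n - 1), Nat.cast_sub (by omega : 1 ≤ n), Nat.cast_one,
      ← Real.rpow_natCast y 2]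
    have hyy : y ^ ((n:ℝ) - 1) * y ^ ((2:ℕ):ℝ) = y ^ ((n:ℝ) + 1) := by
      rw [← Real.rpow_add hy0]; push_cast; ring_nf
    rw [← hyy]
    ring
  -- kappa power relation
  have hkc : kappa n s ^ (critExp n s) = (((n:ℝ) - s) * ((n:ℝ) - 2)) * kappa n s ^ 2 := by
    have h2 : critExp n s = 2 + 2 * (2 - s) / ((n:ℝ) - 2) := by
      rw [critExp]; field_simp; ring
    rw [h2, Real.rpow_add hkappa, Real.rpow_two]
    have : kappa n s ^ (2 * (2 - s) / ((n:ℝ) - 2)) = ((n:ℝ) - s) * ((n:ℝ) - 2) := by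
      rw [kappa, ← Real.rpow_mul (by positivity)]
      rw [show ((n:ℝ) - 2) / (2 * (2 - s)) * (2 * (2 - s) / ((n:ℝ) - 2)) = 1 by
        field_simp]
      exact Real.rpow_one _
    rw [this]; ring
  -- The J relation
  have hbt : 2 * ((n:ℝ) - 2) / (2 - s) * (2 - s) = 2 * ((n:ℝ) - 2) := by field_simp
  have hJ := Jint_ratio (t := 2 - s) (a := (n:ℝ) + 1) (b := 2 * ((n:ℝ) - 2) / (2 - s))
    ht (by positivity) (by rw [hbt]; linarith)
  rw [hbt] at hJ
  rw [show (n:ℝ) + 1 + (2 - s) = (n:ℝ) + 3 - s by ring] at hJ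
  rw [show 2 * ((n:ℝ) - 2) / (2 - s) + 2 = 2 * ((n:ℝ) - s) / (2 - s) by field_simp; ring] at hJ
  rw [show 2 * ((n:ℝ) - 2) / (2 - s) + 1 = (2 * (n:ℝ) - 2 - s) / (2 - s) by field_simp; ring] at hJ
  rw [show (2 * (n:ℝ) - 2 - s) / (2 - s) * (2 - s) = 2 * (n:ℝ) - 2 - s by field_simp] at hJ
  have hJ2pos : 0 < Jint (2 - s) ((n:ℝ) + 1) (2 * ((n:ℝ) - 2) / (2 - s)) := by
    apply Jint_pos ht (by linarith)
    rw [hbt]; linarith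
  -- Final assembly
  rw [hnum, hden, hkc]
  rw [div_eq_div_iff (mul_pos hCpos (mul_pos (pow_pos hkappa 2) hJ2pos)).ne'
    (by nlinarith : (0:ℝ) < 2 * (2 * (n:ℝ) - 2 - s)).ne']
  linear_combination (((n:ℝ) - s) * C * kappa n s ^ 2) * hJ
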